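/- Let I be a network coding instance that is (ε, R, n)-feasible with ε < 1/2 via an Abelian group network code {X_f : f ∈ S ∪ E}. Then the edge removal statement holds on I: for every edge e* of I with capacity R_{e*}, the instance I' obtained from I by removing e* is (ε, R − R_{e*}·1, n)-feasible, where (R − R_{e*}·1)_i = max(0, R_i − R_{e*}). -/

import Mathlib

open scoped Classical
open Finset

noncomputable section

/-- A network coding instance `I = (N, S, T, M)`: a finite directed acyclic graph with
edge capacities, source nodes (no incoming edges), terminal nodes (no outgoing edges),
and a demand relation (`demands s t` means terminal `t` demands source `s`). -/
structure NetworkInstance where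
  V : Type
  [fintypeV : Fintype V]
  [decEqV : DecidableEq V]
  E : Finset (V × V)
  cap : V × V → ℝ
  cap_pos : ∀ e ∈ E, 0 < cap e
  S : Finset V
  T : Finset V
  demands : V → V → Prop
  src_no_in : ∀ s ∈ S, ∀ e ∈ E, e.2 ≠ s
  ter_no_out : ∀ t ∈ T, ∀ e ∈ E, e.1 ≠ t
  disjointST : Disjoint S T
  acyclic : ∃ ord : V → ℕ, ∀ e ∈ E, ord e.1 < ord e.2

attribute [instance] NetworkInstance.fintypeV NetworkInstance.decEqV

/-- A network code of blocklength `n` and rate vector `R` on the instance `I`.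
Sources are independent and uniform on their (finite, nonempty) alphabets, which is modelled
by taking the whole product of the source alphabets as the (uniform) sample space.
`ge e` is the global encoding function of edge `e` (a function of the source message vector),
`dec t` the decoding function of terminal `t` (a function of the messages on incoming edges
of `t`, producing reconstructions of the demanded sources).
`local_enc` states that the message on an edge `e = (u,v)` is determined by the messages on
the incoming edges of `u` (together with the source message at `u`, when `u` is a source).
`rate` states `H(X_i) = log₂|𝒳_i| ≥ n·R_i`, and `capBound` states `log₂|𝒳_e| ≤ n·R_e`. -/
structure NetworkCode (I : NetworkInstance) (R : I.V → ℝ) (n : ℕ) where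
  srcA : I.V → Type
  edgeA : I.V × I.V → Type
  [finSrc : ∀ v, Fintype (srcA v)]
  [finEdge : ∀ e, Fintype (edgeA e)]
  [neSrc : ∀ v, Nonempty (srcA v)]
  [neEdge : ∀ e, Nonempty (edgeA e)]
  ge : (e : I.V × I.V) → ((s : {v // v ∈ I.S}) → srcA s.1) → edgeA e
  dec : (t : {v // v ∈ I.T}) →
    ((f : {e : I.V × I.V // e ∈ I.E ∧ e.2 = t.1}) → edgeA f.1) →
    ((s : {v // v ∈ I.S ∧ I.demands v t.1}) → srcA s.1)
  local_enc : ∀ e ∈ I.E, ∀ x y : ((s : {v // v ∈ I.S}) → srcA s.1),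
    (∀ s : {v // v ∈ I.S}, (s : I.V) = e.1 → x s = y s) →
    (∀ f ∈ I.E, f.2 = e.1 → ge f x = ge f y) →
    ge e x = ge e y
  rate : ∀ v ∈ I.S, (2 : ℝ) ^ ((n : ℝ) * R v) ≤ Fintype.card (srcA v)
  capBound : ∀ e ∈ I.E, (Fintype.card (edgeA e) : ℝ) ≤ (2 : ℝ) ^ ((n : ℝ) * I.cap e)

attribute [instance] NetworkCode.finSrc NetworkCode.finEdge NetworkCode.neSrc NetworkCode.neEdge

/-- The source message vector space `𝒳_S = ∏ 𝒳_i`; the sources being independent and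
uniform, the probability space is the uniform distribution on `Msg`. -/
abbrev NetworkCode.Msg {I : NetworkInstance} {R : I.V → ℝ} {n : ℕ} (C : NetworkCode I R n) : Type :=
  (s : {v // v ∈ I.S}) → C.srcA s.1

/-- Terminal `t` decodes the source vector `x` correctly. -/
def NetworkCode.Correct {I : NetworkInstance} {R : I.V → ℝ} {n : ℕ} (C : NetworkCode I R n)
    (t : {v // v ∈ I.T}) (x : C.Msg) : Prop :=
  C.dec t (fun f => C.ge f.1 x) = fun s : {v : I.V // v ∈ I.S ∧ I.demands v t.1} => x ⟨s.1, s.2.1⟩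

/-- `x` is "good": every terminal decodes it correctly. -/
def NetworkCode.Good {I : NetworkInstance} {R : I.V → ℝ} {n : ℕ} (C : NetworkCode I R n)
    (x : C.Msg) : Prop := ∀ t, C.Correct t x

/-- The code has decoding error probability at most `ε` at every terminal
(w.r.t. the uniform distribution on source messages). -/
def NetworkCode.Achieves {I : NetworkInstance} {R : I.V → ℝ} {n : ℕ} (C : NetworkCode I R n)
    (ε : ℝ) : Prop :=
  ∀ t : {v // v ∈ I.T},
    ((Finset.univ.filter fun x : C.Msg => ¬ C.Correct t x).card : ℝ) ≤ ε * Fintype.card C.Msg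

/-- `I` is `(ε, R, n)`-feasible. -/
def Feasible (I : NetworkInstance) (ε : ℝ) (R : I.V → ℝ) (n : ℕ) : Prop :=
  ∃ C : NetworkCode I R n, C.Achieves ε

/-- The instance `I'` obtained from `I` by removing the edge `e`. -/
def NetworkInstance.removeEdge (I : NetworkInstance) (e : I.V × I.V) : NetworkInstance where
  V := I.V
  fintypeV := I.fintypeV
  decEqV := I.decEqV
  E := I.E.erase e
  cap := I.cap
  cap_pos := fun f hf => I.cap_pos f (Finset.mem_of_mem_erase hf)
  S := I.S
  T := I.T
  demands := I.demands
  src_no_in := fun s hs f hf => I.src_no_in s hs f (Finset.mem_of_mem_erase hf)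
  ter_no_out := fun t ht f hf => I.ter_no_out t ht f (Finset.mem_of_mem_erase hf)
  disjointST := I.disjointST
  acyclic := ⟨I.acyclic.choose, fun f hf => I.acyclic.choose_spec f (Finset.mem_of_mem_erase hf)⟩

/-- The reduced rate vector `R - R_{e*}·1`, i.e. `i ↦ max 0 (R_i - R_{e*})`. -/
def reducedRate (I : NetworkInstance) (R : I.V → ℝ) (e : I.V × I.V) : I.V → ℝ :=
  fun v => max 0 (R v - I.cap e)

/-- An Abelian group characterization of a network code: a finite Abelian group `G` with
subgroups `G_f` for every source and every edge, together with a balanced map `lift : G → 𝒳_S`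
(pushing the uniform distribution on `G` to the uniform distribution on source vectors),
such that the value of each source (resp. edge) message is, up to bijective relabeling,
the left coset of `G_f` of the uniform group element; w.l.o.g. `∩_{i∈S} G_i = {1}`. -/
structure AbelianGroupChar {I : NetworkInstance} {R : I.V → ℝ} {n : ℕ}
    (C : NetworkCode I R n) where
  G : Type
  [grp : CommGroup G]
  [fin : Fintype G]
  Gs : {v // v ∈ I.S} → Subgroup G
  Ge : {e : I.V × I.V // e ∈ I.E} → Subgroup G
  lift : G → C.Msg
  balanced : ∀ x : C.Msg,
    (Finset.univ.filter fun g : G => lift g = x).card * Fintype.card C.Msg = Fintype.card G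
  src_char : ∀ s : {v // v ∈ I.S}, ∀ g g' : G,
    g⁻¹ * g' ∈ Gs s ↔ lift g s = lift g' s
  edge_char : ∀ e : {e : I.V × I.V // e ∈ I.E}, ∀ g g' : G,
    g⁻¹ * g' ∈ Ge e ↔ C.ge e.1 (lift g) = C.ge e.1 (lift g')
  triv_inter : (⨅ s : {v // v ∈ I.S}, Gs s) = ⊥


attribute [instance] AbelianGroupChar.grp AbelianGroupChar.fin

namespace EdgeRemovalAux

variable {I : NetworkInstance} {R : I.V → ℝ} {n : ℕ} {C : NetworkCode I R n}

lemma lift_injective (A : AbelianGroupChar C) : Function.Injective A.lift := by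
  intro g g' h
  have h1 : g⁻¹ * g' ∈ ⨅ s : {v // v ∈ I.S}, A.Gs s :=
    Subgroup.mem_iInf.mpr fun s => (A.src_char s g g').2 (congrFun h s)
  rw [A.triv_inter, Subgroup.mem_bot, inv_mul_eq_one] at h1
  exact h1

lemma lift_surjective (A : AbelianGroupChar C) : Function.Surjective A.lift := by
  intro x
  by_contra h
  push_neg at h
  have hb := A.balanced x
  rw [Finset.filter_false_of_mem (fun g _ => h g)] at hb
  simp only [Finset.card_empty, Nat.zero_mul] at hb
  have := Fintype.card_pos (α := A.G)
  omega

/-- `P_v := ∩_{j ≠ v} G_j`. -/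
def Psub (A : AbelianGroupChar C) (v : I.V) : Subgroup A.G :=
  ⨅ j : {v' // v' ∈ I.S}, ⨅ _ : (j : I.V) ≠ v, A.Gs j

lemma mem_Psub {A : AbelianGroupChar C} {v : I.V} {g : A.G} :
    g ∈ Psub A v ↔ ∀ j : {v' // v' ∈ I.S}, (j : I.V) ≠ v → g ∈ A.Gs j := by
  simp [Psub, Subgroup.mem_iInf]

/-- The new source subgroup for `v`: `K_v := G_{e*} ∩ P_v`. -/
def Ksub (A : AbelianGroupChar C) {estar : I.V × I.V} (he : estar ∈ I.E) (v : I.V) :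
    Subgroup A.G :=
  A.Ge ⟨estar, he⟩ ⊓ Psub A v

/-- The embedding of the new message space into the group. -/
def psi (A : AbelianGroupChar C) {estar : I.V × I.V} (he : estar ∈ I.E)
    (x : (s : {v // v ∈ I.S}) → Ksub A he s.1) : A.G :=
  ∏ s, (x s : A.G)

lemma psi_mem_K (A : AbelianGroupChar C) {estar : I.V × I.V} (he : estar ∈ I.E)
    (x : (s : {v // v ∈ I.S}) → Ksub A he s.1) : psi A he x ∈ A.Ge ⟨estar, he⟩ :=
  Subgroup.prod_mem _ fun s _ => (Subgroup.mem_inf.mp (x s).2).1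

lemma coord_mem_Gs (A : AbelianGroupChar C) {estar : I.V × I.V} (he : estar ∈ I.E)
    (x : (s : {v // v ∈ I.S}) → Ksub A he s.1) {j s : {v // v ∈ I.S}} (hjs : j ≠ s) :
    (x j : A.G) ∈ A.Gs s :=
  (mem_Psub.mp (Subgroup.mem_inf.mp (x j).2).2) s (fun h => hjs ((Subtype.ext h).symm))

lemma inv_coord_mul_psi_mem (A : AbelianGroupChar C) {estar : I.V × I.V} (he : estar ∈ I.E)
    (x : (s : {v // v ∈ I.S}) → Ksub A he s.1) (s : {v // v ∈ I.S}) :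
    (x s : A.G)⁻¹ * psi A he x ∈ A.Gs s := by
  have h := Finset.mul_prod_erase Finset.univ (fun j => (x j : A.G)) (Finset.mem_univ s)
  have h2 : (x s : A.G)⁻¹ * psi A he x = ∏ j ∈ Finset.univ.erase s, (x j : A.G) := by
    rw [psi, ← h]; group
  rw [h2]
  exact Subgroup.prod_mem _ fun j hj => coord_mem_Gs A he x (Finset.mem_erase.mp hj).1

lemma coord_eq_of_mem (A : AbelianGroupChar C) {estar : I.V × I.V} (he : estar ∈ I.E)
    (x y : (s : {v // v ∈ I.S}) → Ksub A he s.1) (s : {v // v ∈ I.S})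
    (hG : (psi A he x)⁻¹ * psi A he y ∈ A.Gs s) : x s = y s := by
  have hx := inv_coord_mul_psi_mem A he x s
  have hy := inv_coord_mul_psi_mem A he y s
  have key : (x s : A.G)⁻¹ * (y s : A.G)
      = ((x s : A.G)⁻¹ * psi A he x) * ((psi A he x)⁻¹ * psi A he y)
        * ((y s : A.G)⁻¹ * psi A he y)⁻¹ := by
    group
  have hmem : (x s : A.G)⁻¹ * (y s : A.G) ∈ A.Gs s :=
    key ▸ mul_mem (mul_mem hx hG) (inv_mem hy)
  have hall : (x s : A.G)⁻¹ * (y s : A.G) ∈ ⨅ j : {v // v ∈ I.S}, A.Gs j := by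
    refine Subgroup.mem_iInf.mpr fun j => ?_
    by_cases hj : j = s
    · subst hj; exact hmem
    · exact mul_mem (inv_mem (coord_mem_Gs A he x fun h => hj h.symm))
        (coord_mem_Gs A he y fun h => hj h.symm)
  rw [A.triv_inter, Subgroup.mem_bot, inv_mul_eq_one] at hall
  exact Subtype.ext hall

/-- Key structural lemma: if the code achieves error `ε < 1/2`, then any group element lying
in all subgroups of edges incoming to terminal `t` lies in the subgroup of each source
demanded by `t`. -/
lemma key_structural (A : AbelianGroupChar C) {ε : ℝ} (hε : ε < 1/2) (hfeas : C.Achieves ε)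
    (t : {v // v ∈ I.T}) (s : I.V) (hs : s ∈ I.S) (hdem : I.demands s t.1)
    (d : A.G) (hd : ∀ f (hf : f ∈ I.E), f.2 = t.1 → d ∈ A.Ge ⟨f, hf⟩) :
    d ∈ A.Gs ⟨s, hs⟩ := by
  by_contra hds
  have hGB : ∀ g : A.G, C.Correct t (A.lift g) → ¬ C.Correct t (A.lift (g * d)) := by
    intro g hg hgd
    apply hds
    have hobs : (fun f : {e : I.V × I.V // e ∈ I.E ∧ e.2 = t.1} => C.ge f.1 (A.lift g))
        = fun f : {e : I.V × I.V // e ∈ I.E ∧ e.2 = t.1} => C.ge f.1 (A.lift (g * d)) := by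
      funext f
      refine (A.edge_char ⟨f.1, f.2.1⟩ g (g * d)).1 ?_
      simpa using hd f.1 f.2.1 f.2.2
    unfold NetworkCode.Correct at hg hgd
    have e1 := congrFun hg ⟨s, ⟨hs, hdem⟩⟩
    have e2 := congrFun hgd ⟨s, ⟨hs, hdem⟩⟩
    rw [hobs] at e1
    have h1 : A.lift g ⟨s, hs⟩ = A.lift (g * d) ⟨s, hs⟩ := e1.symm.trans e2
    have := (A.src_char ⟨s, hs⟩ g (g * d)).2 h1
    simpa using this
  set p := fun g : A.G => C.Correct t (A.lift g) with hp
  have hmaps : ∀ g ∈ Finset.univ.filter p, g * d ∈ Finset.univ.filter fun g => ¬ p g := by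
    intro g hg
    simp only [Finset.mem_filter, Finset.mem_univ, true_and] at hg ⊢
    exact hGB g hg
  have hinj : Set.InjOn (fun g => g * d) ↑(Finset.univ.filter p) :=
    fun a _ b _ h => mul_right_cancel h
  have hcard : (Finset.univ.filter p).card ≤ (Finset.univ.filter fun g => ¬ p g).card :=
    Finset.card_le_card_of_injOn _ hmaps hinj
  have hsum : (Finset.univ.filter p).card + (Finset.univ.filter fun g => ¬ p g).card
      = Fintype.card A.G := by
    rw [Finset.card_filter_add_card_filter_not]
    exact Finset.card_univ
  have hbadeq : (Finset.univ.filter fun g : A.G => ¬ p g).card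
      = (Finset.univ.filter fun x : C.Msg => ¬ C.Correct t x).card := by
    refine Finset.card_bij (fun g _ => A.lift g) ?_ ?_ ?_
    · intro g hg; simp only [Finset.mem_filter, Finset.mem_univ, true_and] at hg ⊢; exact hg
    · intro a _ b _ h; exact lift_injective A h
    · intro x hx
      obtain ⟨g, rfl⟩ := lift_surjective A x
      exact ⟨g, by simpa using hx, rfl⟩
  have hGM : Fintype.card A.G = Fintype.card C.Msg :=
    Fintype.card_of_bijective ⟨lift_injective A, lift_surjective A⟩
  have hb := hfeas t
  have hpos : (0:ℝ) < Fintype.card A.G := by exact_mod_cast Fintype.card_pos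
  have hnat : Fintype.card A.G
      ≤ 2 * (Finset.univ.filter fun x : C.Msg => ¬ C.Correct t x).card := by omega
  have hreal : (Fintype.card A.G : ℝ)
      ≤ 2 * ((Finset.univ.filter fun x : C.Msg => ¬ C.Correct t x).card : ℝ) := by
    exact_mod_cast hnat
  have hgm : (Fintype.card A.G : ℝ) = Fintype.card C.Msg := by exact_mod_cast hGM
  nlinarith [hb, hpos, hreal, hgm]

/-- Combined decoding lemma for the new code. -/
lemma decode_eq (A : AbelianGroupChar C) {estar : I.V × I.V} (he : estar ∈ I.E)
    {ε : ℝ} (hε : ε < 1/2) (hfeas : C.Achieves ε)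
    (t : {v // v ∈ I.T}) (x y : (s : {v // v ∈ I.S}) → Ksub A he s.1)
    (hobs : ∀ f (hf : f ∈ I.E), f ≠ estar → f.2 = t.1 →
      C.ge f (A.lift (psi A he x)) = C.ge f (A.lift (psi A he y)))
    (s : I.V) (hs : s ∈ I.S) (hdem : I.demands s t.1) :
    x ⟨s, hs⟩ = y ⟨s, hs⟩ := by
  have hd : ∀ f (hf : f ∈ I.E), f.2 = t.1 → (psi A he x)⁻¹ * psi A he y ∈ A.Ge ⟨f, hf⟩ := by
    intro f hf hft
    by_cases hfe : f = estar
    · subst hfe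
      exact mul_mem (inv_mem (psi_mem_K A he x)) (psi_mem_K A he y)
    · exact (A.edge_char ⟨f, hf⟩ _ _).2 (hobs f hf hfe hft)
  exact coord_eq_of_mem A he x y ⟨s, hs⟩ (key_structural A hε hfeas t s hs hdem _ hd)

lemma card_srcA_le (A : AbelianGroupChar C) (v : I.V) (hv : v ∈ I.S) :
    Fintype.card (C.srcA v) ≤ Fintype.card (Psub A v) := by
  refine Fintype.card_le_of_surjective (fun p => A.lift (p : A.G) ⟨v, hv⟩) ?_
  intro a
  obtain ⟨g, hg⟩ := lift_surjective A (Function.update (A.lift 1) ⟨v, hv⟩ a)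
  refine ⟨⟨g, ?_⟩, ?_⟩
  · refine mem_Psub.mpr fun j hj => ?_
    have hji : j ≠ (⟨v, hv⟩ : {v' // v' ∈ I.S}) := fun h => hj (congrArg Subtype.val h)
    have h1 : A.lift g j = A.lift 1 j := by
      rw [hg, Function.update_of_ne hji]
    have h2 := (A.src_char j 1 g).2 h1.symm
    simpa using h2
  · show A.lift g ⟨v, hv⟩ = a
    rw [hg]
    exact Function.update_self _ _ _

/-- A representative in `P_v` of a given edge-`e*` message value (if any). -/
def edgeRep (A : AbelianGroupChar C) {estar : I.V × I.V} (he : estar ∈ I.E) (v : I.V)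
    (b : C.edgeA estar) : ↥(Psub A v) :=
  if h : ∃ p : ↥(Psub A v), C.ge estar (A.lift (p : A.G)) = b then h.choose else 1

lemma card_Psub_le (A : AbelianGroupChar C) {estar : I.V × I.V} (he : estar ∈ I.E) (v : I.V) :
    Fintype.card (Psub A v) ≤ Fintype.card (Ksub A he v) * Fintype.card (C.edgeA estar) := by
  rw [← Fintype.card_prod]
  have hrep : ∀ p : ↥(Psub A v),
      C.ge estar (A.lift ((edgeRep A he v (C.ge estar (A.lift (p : A.G)))) : A.G))
        = C.ge estar (A.lift (p : A.G)) := by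
    intro p
    have hex : ∃ q : ↥(Psub A v),
        C.ge estar (A.lift (q : A.G)) = C.ge estar (A.lift (p : A.G)) := ⟨p, rfl⟩
    rw [edgeRep, dif_pos hex]
    exact hex.choose_spec
  have hmemK : ∀ p : ↥(Psub A v),
      ((edgeRep A he v (C.ge estar (A.lift (p : A.G)))) : A.G)⁻¹ * (p : A.G)
        ∈ Ksub A he v := by
    intro p
    refine Subgroup.mem_inf.mpr ⟨?_, ?_⟩
    · exact (A.edge_char ⟨estar, he⟩ _ _).2 (hrep p)
    · exact mul_mem (inv_mem (edgeRep A he v _).2) p.2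
  refine Fintype.card_le_of_injective (fun p =>
    (⟨((edgeRep A he v (C.ge estar (A.lift (p : A.G)))) : A.G)⁻¹ * (p : A.G), hmemK p⟩,
      C.ge estar (A.lift (p : A.G)))) ?_
  intro p q h
  have h2 : C.ge estar (A.lift (p : A.G)) = C.ge estar (A.lift (q : A.G)) :=
    congrArg Prod.snd h
  have h1 : ((edgeRep A he v (C.ge estar (A.lift (p : A.G)))) : A.G)⁻¹ * (p : A.G)
      = ((edgeRep A he v (C.ge estar (A.lift (q : A.G)))) : A.G)⁻¹ * (q : A.G) :=
    Subtype.ext_iff.mp (congrArg Prod.fst h)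
  rw [h2] at h1
  exact Subtype.ext (mul_left_cancel h1)

lemma rate_new (A : AbelianGroupChar C) {estar : I.V × I.V} (he : estar ∈ I.E)
    (v : I.V) (hv : v ∈ I.S) :
    (2:ℝ) ^ ((n : ℝ) * reducedRate I R estar v) ≤ Fintype.card (Ksub A he v) := by
  have hne : Nonempty ↥(Ksub A he v) := ⟨1⟩
  have hKpos : (0:ℝ) < Fintype.card (Ksub A he v) := by exact_mod_cast Fintype.card_pos
  rcases le_or_gt (R v) (I.cap estar) with h | h
  · have h0 : reducedRate I R estar v = 0 := max_eq_left (by linarith)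
    rw [h0, mul_zero, Real.rpow_zero]
    exact_mod_cast Fintype.card_pos
  · have h0 : reducedRate I R estar v = R v - I.cap estar := max_eq_right (by linarith)
    have h1 := C.rate v hv
    have h2 := C.capBound estar he
    have h3 := card_srcA_le A v hv
    have h4 := card_Psub_le A he v
    have hcap : (0:ℝ) < (2:ℝ) ^ ((n:ℝ) * I.cap estar) := Real.rpow_pos_of_pos two_pos _
    have hchain : (2:ℝ) ^ ((n:ℝ) * R v)
        ≤ (Fintype.card (Ksub A he v) : ℝ) * (2:ℝ) ^ ((n:ℝ) * I.cap estar) := by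
      calc (2:ℝ) ^ ((n:ℝ) * R v) ≤ (Fintype.card (C.srcA v) : ℝ) := h1
        _ ≤ (Fintype.card (Psub A v) : ℝ) := by exact_mod_cast h3
        _ ≤ ((Fintype.card (Ksub A he v) * Fintype.card (C.edgeA estar) : ℕ) : ℝ) := by
            exact_mod_cast h4
        _ ≤ (Fintype.card (Ksub A he v) : ℝ) * (2:ℝ) ^ ((n:ℝ) * I.cap estar) := by
            push_cast
            exact mul_le_mul_of_nonneg_left h2 (by positivity)
    rw [h0]
    have hsplit : (n:ℝ) * (R v - I.cap estar) = (n:ℝ) * R v - (n:ℝ) * I.cap estar := by ring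
    rw [hsplit, Real.rpow_sub two_pos, div_le_iff₀ hcap]
    linarith

/-- The decoder of the new code. -/
def newDec (A : AbelianGroupChar C) {estar : I.V × I.V} (he : estar ∈ I.E)
    (t : {v // v ∈ I.T})
    (f : (f' : {e : I.V × I.V // e ∈ I.E.erase estar ∧ e.2 = t.1}) → C.edgeA f'.1) :
    (s : {v // v ∈ I.S ∧ I.demands v t.1}) → Ksub A he s.1 :=
  if h : ∃ y : (s : {v // v ∈ I.S}) → Ksub A he s.1,
      ∀ f', C.ge f'.1 (A.lift (psi A he y)) = f f'
  then fun s => h.choose ⟨s.1, s.2.1⟩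
  else fun _ => 1

/-- The network code on `I.removeEdge estar` obtained by restricting the sources of the
Abelian group code to the subgroups `K_v`. -/
def newCode (A : AbelianGroupChar C) {estar : I.V × I.V} (he : estar ∈ I.E) :
    NetworkCode (I.removeEdge estar) (reducedRate I R estar) n where
  srcA v := ↥(Ksub A he v)
  edgeA := C.edgeA
  finSrc v := inferInstance
  finEdge := C.finEdge
  neSrc v := ⟨1⟩
  neEdge := C.neEdge
  ge e x := C.ge e (A.lift (psi A he x))
  dec t f := newDec A he t f
  local_enc := by
    intro e hee x y hsrc hedge
    refine C.local_enc e (Finset.mem_of_mem_erase hee) _ _ ?_ ?_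
    · intro s hse
      refine (A.src_char s _ _).1 ?_
      have hc : (x s : A.G) = (y s : A.G) := by rw [hsrc s hse]
      have key : (psi A he x)⁻¹ * psi A he y
          = ((x s : A.G)⁻¹ * psi A he x)⁻¹ * ((y s : A.G)⁻¹ * psi A he y) := by
        rw [hc]; group
      rw [key]
      exact mul_mem (inv_mem (inv_coord_mul_psi_mem A he x s))
        (inv_coord_mul_psi_mem A he y s)
    · intro f hf hfe
      by_cases hfe' : f = estar
      · subst hfe'
        exact (A.edge_char ⟨f, hf⟩ _ _).1
          (mul_mem (inv_mem (psi_mem_K A he x)) (psi_mem_K A he y))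
      · exact hedge f (Finset.mem_erase.mpr ⟨hfe', hf⟩) hfe
  rate := fun v hv => rate_new A he v hv
  capBound := fun e hee => C.capBound e (Finset.mem_of_mem_erase hee)

lemma newCode_correct (A : AbelianGroupChar C) {estar : I.V × I.V} (he : estar ∈ I.E)
    {ε : ℝ} (hε : ε < 1/2) (hfeas : C.Achieves ε)
    (t : {v // v ∈ I.T}) (x : (s : {v // v ∈ I.S}) → Ksub A he s.1) :
    (newCode A he (R := R) (n := n)).Correct t x := by
  have main : newDec A he t (fun f' => C.ge f'.1 (A.lift (psi A he x)))
      = fun s : {v // v ∈ I.S ∧ I.demands v t.1} => x ⟨s.1, s.2.1⟩ := by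
    unfold newDec
    split
    · next h =>
      funext s
      have hy := h.choose_spec
      refine decode_eq A he hε hfeas t h.choose x ?_ s.1 s.2.1 s.2.2
      intro f hf hne hft
      have := hy ⟨f, Finset.mem_erase.mpr ⟨hne, hf⟩, hft⟩
      simpa using this
    · next h => exact absurd ⟨x, fun _ => rfl⟩ h
  exact main

end EdgeRemovalAux

open EdgeRemovalAux in
/-- **Corollary 2 (edge removal for Abelian group network codes).**
If `I` is `(ε,R,n)`-feasible with `ε < 1/2` via an Abelian group network code, then for every
edge `e*` of `I`, removing `e*` leaves the instance `(ε, R - R_{e*}·1, n)`-feasible. -/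
theorem edge_removal_abelian_group_code
    (I : NetworkInstance) (ε : ℝ) (R : I.V → ℝ) (n : ℕ) (hε : ε < 1/2)
    (C : NetworkCode I R n) (hfeas : C.Achieves ε)
    (habelian : Nonempty (AbelianGroupChar C)) :
    ∀ estar ∈ I.E, Feasible (I.removeEdge estar) ε (reducedRate I R estar) n := by
  intro estar he
  obtain ⟨A⟩ := habelian
  refine ⟨newCode A he, ?_⟩
  intro t
  have hcorr : ∀ x, (newCode A he (R := R) (n := n)).Correct t x :=
    fun x => newCode_correct A he hε hfeas t x
  haveI : ∀ s, Fintype ((newCode A he (R := R) (n := n)).srcA s) := (newCode A he).finSrc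
  have hempty : (Finset.univ.filter fun x => ¬ (newCode A he (R := R) (n := n)).Correct t x)
      = ∅ :=
    Finset.filter_false_of_mem fun x _ => not_not_intro (hcorr x)
  refine le_trans (le_of_eq (b := ((0 : ℕ) : ℝ)) (by simp [hcorr])) ?_
  have hb := hfeas t
  have hpos : (0:ℝ) < Fintype.card C.Msg := by
    exact_mod_cast Fintype.card_pos (α := C.Msg)
  have hε0 : 0 ≤ ε := by
    nlinarith [hb, Nat.cast_nonneg (α := ℝ) ((Finset.univ.filter
      fun x : C.Msg => ¬ C.Correct t x).card)]
  push_cast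
  exact mul_nonneg hε0 (Nat.cast_nonneg _)

end
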